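/- Let n > r ≥ 1, let A = [[A₁₁, A₁₂],[A₂₁, A₂₂]] ∈ Mₙ(ℝ) with A₁₁ ∈ M_r(ℝ) invertible, and let B₂₂ ∈ M_{n−r}(ℝ) be invertible. Suppose there exists a block-diagonal symmetrizer S = diag(S₁₁, S₂₂) ∈ Mₙ(ℝ) which is symmetric positive definite, such that SA is symmetric and S₂₂B₂₂ + (S₂₂B₂₂)ᵗ is positive definite. Then every complex eigenvalue of B₂₂⁻¹(A₂₂ − A₂₁ A₁₁⁻¹ A₁₂) lying on the imaginary axis is equal to 0. -/

import Mathlib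

open Matrix

noncomputable section

private lemma aux_re {s : ℕ} (P : Matrix (Fin s) (Fin s) ℝ) (v : Fin s → ℂ) :
    (star v ⬝ᵥ (P.map (algebraMap ℝ ℂ)) *ᵥ v).re =
      (fun i => (v i).re) ⬝ᵥ (P *ᵥ fun i => (v i).re) +
      (fun i => (v i).im) ⬝ᵥ (P *ᵥ fun i => (v i).im) := by
  simp only [dotProduct, mulVec, Pi.star_apply, map_apply, Complex.re_sum, Finset.mul_sum,
    ← Finset.sum_add_distrib]
  refine Finset.sum_congr rfl fun i _ => Finset.sum_congr rfl fun j _ => ?_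
  simp only [RCLike.star_def, Complex.mul_re, Complex.conj_re, Complex.conj_im, Complex.mul_im,
    Complex.coe_algebraMap, Complex.ofReal_re, Complex.ofReal_im]
  ring

private lemma aux_pos {s : ℕ} {P : Matrix (Fin s) (Fin s) ℝ} (hP : P.PosDef) {v : Fin s → ℂ}
    (hv : v ≠ 0) : 0 < (star v ⬝ᵥ (P.map (algebraMap ℝ ℂ)) *ᵥ v).re := by
  rw [aux_re]
  set x : Fin s → ℝ := fun i => (v i).re
  set y : Fin s → ℝ := fun i => (v i).im
  have hxy : x ≠ 0 ∨ y ≠ 0 := by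
    by_contra h
    push_neg at h
    apply hv
    funext i
    have h1 := congrFun h.1 i
    have h2 := congrFun h.2 i
    simp only [x, y, Pi.zero_apply] at h1 h2
    exact Complex.ext h1 h2
  have hx' : ∀ z : Fin s → ℝ, 0 ≤ z ⬝ᵥ P *ᵥ z := fun z => by
    have := hP.posSemidef.dotProduct_mulVec_nonneg z
    simpa using this
  rcases hxy with h | h
  · have := hP.dotProduct_mulVec_pos h
    have h2 := hx' y
    simp only [star_trivial] at this
    linarith
  · have := hP.dotProduct_mulVec_pos h
    have h2 := hx' x
    simp only [star_trivial] at this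
    linarith

private lemma aux_symm (r s : ℕ)
    (A11 : Matrix (Fin r) (Fin r) ℝ) (A12 : Matrix (Fin r) (Fin s) ℝ)
    (A21 : Matrix (Fin s) (Fin r) ℝ) (A22 : Matrix (Fin s) (Fin s) ℝ)
    (hA11inv : IsUnit A11.det)
    (S11 : Matrix (Fin r) (Fin r) ℝ) (S22 : Matrix (Fin s) (Fin s) ℝ)
    (hS : (Matrix.fromBlocks S11 0 0 S22).PosDef)
    (hSA : ((Matrix.fromBlocks S11 0 0 S22) * (Matrix.fromBlocks A11 A12 A21 A22)).IsSymm) :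
    (S22 * (A22 - A21 * A11⁻¹ * A12)).IsSymm := by
  rw [Matrix.IsSymm, fromBlocks_multiply] at hSA
  rw [fromBlocks_transpose] at hSA
  have h11 : (S11 * A11)ᵀ = S11 * A11 := by simpa using congrArg Matrix.toBlocks₁₁ hSA
  have h12 : (S22 * A21)ᵀ = S11 * A12 := by simpa using congrArg Matrix.toBlocks₁₂ hSA
  have h22 : (S22 * A22)ᵀ = S22 * A22 := by simpa using congrArg Matrix.toBlocks₂₂ hSA
  have hSsym : (fromBlocks S11 0 0 S22)ᵀ = fromBlocks S11 0 0 S22 := by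
    have := hS.isHermitian
    rw [Matrix.IsHermitian, conjTranspose] at this
    rwa [show (star : ℝ → ℝ) = id from funext star_trivial, Matrix.map_id] at this
  rw [fromBlocks_transpose] at hSsym
  have hS11 : S11ᵀ = S11 := by simpa using congrArg Matrix.toBlocks₁₁ hSsym
  have hS22 : S22ᵀ = S22 := by simpa using congrArg Matrix.toBlocks₂₂ hSsym
  have hA11invT : IsUnit A11ᵀ.det := by rwa [Matrix.det_transpose]
  have key : A11ᵀ⁻¹ * S11 = S11 * A11⁻¹ := by
    have h1 : A11ᵀ * S11 = S11 * A11 := by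
      have := h11
      rw [Matrix.transpose_mul, hS11] at this
      exact this
    calc A11ᵀ⁻¹ * S11 = A11ᵀ⁻¹ * (S11 * A11) * A11⁻¹ := by
          rw [Matrix.mul_assoc (A11ᵀ⁻¹), Matrix.mul_assoc S11,
            Matrix.mul_nonsing_inv _ hA11inv, Matrix.mul_one]
      _ = A11ᵀ⁻¹ * (A11ᵀ * S11) * A11⁻¹ := by rw [h1]
      _ = S11 * A11⁻¹ := by
          rw [← Matrix.mul_assoc, Matrix.nonsing_inv_mul _ hA11invT, Matrix.one_mul]
  have hA21S : A21ᵀ * S22 = S11 * A12 := by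
    rw [Matrix.transpose_mul, hS22] at h12; exact h12
  rw [Matrix.IsSymm, Matrix.mul_sub, Matrix.transpose_sub, h22]
  congr 1
  rw [show S22 * (A21 * A11⁻¹ * A12) = (S22 * A21) * A11⁻¹ * A12 by
    simp [Matrix.mul_assoc]]
  rw [Matrix.transpose_mul, Matrix.transpose_mul, Matrix.transpose_mul,
    Matrix.transpose_nonsing_inv, hS22]
  calc A12ᵀ * (A11ᵀ⁻¹ * (A21ᵀ * S22)) = A12ᵀ * (A11ᵀ⁻¹ * (S11 * A12)) := by rw [hA21S]
    _ = A12ᵀ * ((A11ᵀ⁻¹ * S11) * A12) := by rw [Matrix.mul_assoc]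
    _ = A12ᵀ * ((S11 * A11⁻¹) * A12) := by rw [key]
    _ = (A12ᵀ * S11) * (A11⁻¹ * A12) := by simp [Matrix.mul_assoc]
    _ = (S11 * A12)ᵀ * (A11⁻¹ * A12) := by rw [Matrix.transpose_mul, hS11]
    _ = (A21ᵀ * S22)ᵀ * (A11⁻¹ * A12) := by rw [hA21S]
    _ = S22 * A21 * A11⁻¹ * A12 := by
        rw [Matrix.transpose_mul, hS22, Matrix.transpose_transpose]
        simp [Matrix.mul_assoc]

/-- Lemma (symlem): under the symmetrizability assumption (H3), every complex eigenvalue of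
`B₂₂⁻¹(A₂₂ − A₂₁A₁₁⁻¹A₁₂)` lying on the imaginary axis is zero. -/
theorem stmt16 (r s : ℕ) (hr : 1 ≤ r) (hs : 1 ≤ s)
    (A11 : Matrix (Fin r) (Fin r) ℝ) (A12 : Matrix (Fin r) (Fin s) ℝ)
    (A21 : Matrix (Fin s) (Fin r) ℝ) (A22 B22 : Matrix (Fin s) (Fin s) ℝ)
    (hA11inv : IsUnit A11.det) (hB22inv : IsUnit B22.det)
    (S11 : Matrix (Fin r) (Fin r) ℝ) (S22 : Matrix (Fin s) (Fin s) ℝ)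
    (hS : (Matrix.fromBlocks S11 0 0 S22).PosDef)
    (hSA : ((Matrix.fromBlocks S11 0 0 S22) * (Matrix.fromBlocks A11 A12 A21 A22)).IsSymm)
    (hSB : (S22 * B22 + (S22 * B22)ᵀ).PosDef) :
    ∀ μ ∈ spectrum ℂ ((B22⁻¹ * (A22 - A21 * A11⁻¹ * A12)).map (algebraMap ℝ ℂ)),
      μ.re = 0 → μ = 0 := by
  intro μ hμ hre
  set M' : Matrix (Fin s) (Fin s) ℝ := A22 - A21 * A11⁻¹ * A12 with hM'
  set RC : ℝ →+* ℂ := algebraMap ℝ ℂ with hRC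
  -- extract an eigenvector
  rw [spectrum.mem_iff, Matrix.isUnit_iff_isUnit_det, isUnit_iff_ne_zero, not_not] at hμ
  obtain ⟨v, hv0, hv⟩ := (Matrix.exists_mulVec_eq_zero_iff).2 hμ
  have heig : (B22⁻¹ * M').map RC *ᵥ v = μ • v := by
    rw [Matrix.sub_mulVec] at hv
    have h1 : (algebraMap ℂ (Matrix (Fin s) (Fin s) ℂ)) μ *ᵥ v = μ • v := by
      rw [Algebra.algebraMap_eq_smul_one, Matrix.smul_mulVec, Matrix.one_mulVec]
    rw [h1, sub_eq_zero] at hv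
    exact hv.symm
  -- multiply by B22 : M' v = μ B22 v
  have hB : (B22.map RC) * ((B22⁻¹ * M').map RC) = M'.map RC := by
    rw [← Matrix.map_mul, ← Matrix.mul_assoc, Matrix.mul_nonsing_inv _ hB22inv,
      Matrix.one_mul]
  have h2 : M'.map RC *ᵥ v = μ • (B22.map RC *ᵥ v) := by
    have := congrArg (fun w => B22.map RC *ᵥ w) heig
    simp only [Matrix.mulVec_mulVec, Matrix.mulVec_smul] at this
    rwa [hB] at this
  -- multiply by S22 : (S22 M') v = μ (S22 B22) v
  have h3 : (S22 * M').map RC *ᵥ v = μ • ((S22 * B22).map RC *ᵥ v) := by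
    have := congrArg (fun w => S22.map RC *ᵥ w) h2
    simp only [Matrix.mulVec_mulVec, Matrix.mulVec_smul] at this
    rwa [← Matrix.map_mul, ← Matrix.map_mul] at this
  set α : ℂ := star v ⬝ᵥ ((S22 * B22).map RC *ᵥ v) with hα
  set c : ℂ := star v ⬝ᵥ ((S22 * M').map RC *ᵥ v) with hc
  have hcμ : c = μ * α := by
    rw [hc, h3, dotProduct_smul, smul_eq_mul, hα]
  -- c is real (Hermitian quadratic form)
  have Ksymm : (S22 * M').IsSymm :=
    aux_symm r s A11 A12 A21 A22 hA11inv S11 S22 hS hSA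
  have hKh : ((S22 * M').map RC).IsHermitian := by
    have hh : (S22 * M').IsHermitian := by
      ext i j
      rw [Matrix.conjTranspose_apply, star_trivial]
      simpa using (congrFun (congrFun Ksymm j) i).symm
    exact hh.map RC fun x => by simp [hRC, Complex.conj_ofReal]
  have hstarform : ∀ (H : Matrix (Fin s) (Fin s) ℂ),
      star (star v ⬝ᵥ H *ᵥ v) = star v ⬝ᵥ Hᴴ *ᵥ v := by
    intro H
    rw [star_dotProduct, star_star, star_mulVec, ← Matrix.dotProduct_mulVec]
  have hcreal : star c = c := by
    rw [hc, hstarform, hKh.eq]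
  -- conj α in terms of the transpose
  have hwT : ((S22 * B22).map RC)ᴴ = ((S22 * B22)ᵀ).map RC := by
    ext i j
    simp only [Matrix.conjTranspose_apply, Matrix.map_apply, Matrix.transpose_apply, hRC,
      Complex.coe_algebraMap, RCLike.star_def, Complex.conj_ofReal]
  have hαstar : α + star α = star v ⬝ᵥ ((S22 * B22 + (S22 * B22)ᵀ).map RC *ᵥ v) := by
    rw [hα, hstarform, hwT, Matrix.map_add _ (fun a b => map_add RC a b),
      Matrix.add_mulVec, dotProduct_add]
  have hpos : 0 < (α + star α).re := by
    rw [hαstar]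
    exact aux_pos hSB hv0
  -- conclude
  have hconj : star μ = -μ := by
    apply Complex.ext <;> simp [hre]
  have hzero : μ * (α + star α) = 0 := by
    have : μ * α = star μ * star α := by
      rw [← hcμ, ← hcreal, hcμ, star_mul']
    rw [hconj] at this
    ring_nf
    ring_nf at this
    linear_combination this
  rcases mul_eq_zero.mp hzero with h | h
  · exact h
  · exfalso
    rw [h] at hpos
    simp at hpos
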